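/- Let D be a nonzero complex number, and let λ, t be nonnegative reals. Suppose there exist nonzero complex numbers e, f with E = D·e/conj(e) ≠ conj(D) satisfying ((|f|²/e) − 1)(conj(D)·conj(e) − D·e)² = (λ·conj(f) − t·f)(λ·conj(E)·conj(e)·f − t·E·e·conj(f)) (with E = De/conj(e)). Then t = λ if and only if E = D. -/

import Mathlib

/-- Corollary 2.7: among equivalent non-abelian nilpotent complex structures
`(1,λ,D) ~ (1,t,E)` with `E ≠ conj D`, equality of the `λ`-parameters is
equivalent to equality of the `D`-parameters. -/
theorem stmt1 (D : ℂ) (hD0 : D ≠ 0) (lam t : ℝ) (hlam : 0 ≤ lam) (ht : 0 ≤ t)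
    (e f : ℂ) (he : e ≠ 0) (hf : f ≠ 0)
    (E : ℂ) (hE : E = D * e / (starRingEnd ℂ) e) (hEne : E ≠ (starRingEnd ℂ) D)
    (heq : ((Complex.normSq f : ℂ) / e - 1) *
        ((starRingEnd ℂ) D * (starRingEnd ℂ) e - D * e) ^ 2 =
      ((lam : ℂ) * (starRingEnd ℂ) f - (t : ℂ) * f) *
        ((lam : ℂ) * (starRingEnd ℂ) E * (starRingEnd ℂ) e * f -
          (t : ℂ) * E * e * (starRingEnd ℂ) f)) :
    t = lam ↔ E = D := by
  have ha : (starRingEnd ℂ) e ≠ 0 := by simpa using he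
  have hnf : ((Complex.normSq f : ℝ) : ℂ) = f * (starRingEnd ℂ) f := (Complex.mul_conj f).symm
  have hne : (starRingEnd ℂ) D * (starRingEnd ℂ) e - D * e ≠ 0 := by
    intro h
    apply hEne
    rw [hE, div_eq_iff ha]
    linear_combination -h
  rw [hE, hnf] at heq
  simp only [map_div₀, map_mul, Complex.conj_conj] at heq
  field_simp at heq
  have heq2 := congrArg (starRingEnd ℂ) heq
  simp only [map_mul, map_sub, map_pow, Complex.conj_conj, Complex.conj_ofReal] at heq2
  have hg : e * (starRingEnd ℂ) e * (f * (starRingEnd ℂ) f) ≠ 0 :=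
    mul_ne_zero (mul_ne_zero he ha) (mul_ne_zero hf (by simpa using hf))
  have key : (e * (starRingEnd ℂ) e * (f * (starRingEnd ℂ) f)) * (((starRingEnd ℂ) e - e) *
        ((starRingEnd ℂ) D * (starRingEnd ℂ) e - D * e) ^ 2) =
      (e * (starRingEnd ℂ) e * (f * (starRingEnd ℂ) f)) * (((lam : ℂ) ^ 2 - (t : ℂ) ^ 2) *
        ((starRingEnd ℂ) D * ((starRingEnd ℂ) e) ^ 3 - D * e ^ 3)) := by
    linear_combination (e * (starRingEnd ℂ) e) * heq - (e * (starRingEnd ℂ) e) * heq2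
  have key2 : ((starRingEnd ℂ) e - e) *
        ((starRingEnd ℂ) D * (starRingEnd ℂ) e - D * e) ^ 2 =
      ((lam : ℂ) ^ 2 - (t : ℂ) ^ 2) *
        ((starRingEnd ℂ) D * ((starRingEnd ℂ) e) ^ 3 - D * e ^ 3) :=
    mul_left_cancel₀ hg key
  constructor
  · intro htl
    subst htl
    have h0 : ((starRingEnd ℂ) e - e) *
        ((starRingEnd ℂ) D * (starRingEnd ℂ) e - D * e) ^ 2 = 0 := by
      rw [key2]; ring
    have hee : (starRingEnd ℂ) e = e := by
      rcases mul_eq_zero.1 h0 with h | h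
      · exact sub_eq_zero.1 h
      · exact absurd ((pow_eq_zero_iff two_ne_zero).1 h) hne
    rw [hE, hee, mul_div_assoc, div_self he, mul_one]
  · intro hED
    rw [hE, div_eq_iff ha] at hED
    have hee : (starRingEnd ℂ) e = e := (mul_left_cancel₀ hD0 hED).symm
    rw [hee] at key2 hne
    have h3 : ((lam : ℂ) ^ 2 - (t : ℂ) ^ 2) * (e ^ 2 * ((starRingEnd ℂ) D * e - D * e)) = 0 := by
      linear_combination -key2
    have h4 : (lam : ℂ) ^ 2 - (t : ℂ) ^ 2 = 0 := by
      rcases mul_eq_zero.1 h3 with h | h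
      · exact h
      · exact absurd h (mul_ne_zero (pow_ne_zero 2 he) hne)
    have h5 : (t : ℝ) ^ 2 = (lam : ℝ) ^ 2 := by
      have hc : ((t : ℂ)) ^ 2 = ((lam : ℂ)) ^ 2 := by linear_combination -h4
      exact_mod_cast hc
    nlinarith [h5, sq_nonneg (t - lam), sq_nonneg (t + lam)]
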